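/- In the EWL scheme applied to a symmetric 2×2 game (i.e., b_kl = a_lk), the payoff functions satisfy v1(U1⊗U2) = v2(U2⊗U1) for all U1, U2 ∈ SU(2); that is, the EWL quantum game is symmetric. -/

import Mathlib

/-- The maximally entangled state |Ψ⟩ = (|00⟩ + i|11⟩)/√2 as amplitudes. -/
noncomputable def PsiState : Fin 2 → Fin 2 → ℂ := fun k l =>
  if k = 0 ∧ l = 0 then ((Real.sqrt 2)⁻¹ : ℝ)
  else if k = 1 ∧ l = 1 then Complex.I * ((Real.sqrt 2)⁻¹ : ℝ)
  else 0

/-- The EWL strategy U(θ,α,β). -/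
noncomputable def EWLU (θ α β : ℝ) : Matrix (Fin 2) (Fin 2) ℂ :=
  !![Complex.exp (Complex.I * α) * Real.cos (θ/2),
     Complex.I * Complex.exp (Complex.I * β) * Real.sin (θ/2);
     Complex.I * Complex.exp (-(Complex.I * β)) * Real.sin (θ/2),
     Complex.exp (-(Complex.I * α)) * Real.cos (θ/2)]

/-- Action of A ⊗ B on a two-qubit state. -/
noncomputable def tensorApply (A B : Matrix (Fin 2) (Fin 2) ℂ)
    (ψ : Fin 2 → Fin 2 → ℂ) : Fin 2 → Fin 2 → ℂ :=
  fun k l => ∑ k' : Fin 2, ∑ l' : Fin 2, A k k' * B l l' * ψ k' l'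

/-- Inner product ⟨φ|ψ⟩ on ℂ²⊗ℂ². -/
noncomputable def inner2 (φ ψ : Fin 2 → Fin 2 → ℂ) : ℂ :=
  ∑ k : Fin 2, ∑ l : Fin 2, (starRingEnd ℂ) (φ k l) * ψ k l

/-- C₀ = I, C₁ = [[0,i],[i,0]]. -/
noncomputable def Cop : Fin 2 → Matrix (Fin 2) (Fin 2) ℂ := fun k =>
  if k = 0 then 1 else !![0, Complex.I; Complex.I, 0]

/-- The basis states |Ψ_kl⟩ = (C_k ⊗ C_l)|Ψ⟩. -/
noncomputable def PsiBasis (k l : Fin 2) : Fin 2 → Fin 2 → ℂ :=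
  tensorApply (Cop k) (Cop l) PsiState


lemma psi_symm (k l : Fin 2) : PsiState k l = PsiState l k := by
  fin_cases k <;> fin_cases l <;> simp [PsiState]

lemma tensor_swap (A B : Matrix (Fin 2) (Fin 2) ℂ) (k l : Fin 2) :
    tensorApply A B PsiState k l = tensorApply B A PsiState l k := by
  simp only [tensorApply]
  rw [Finset.sum_comm]
  refine Finset.sum_congr rfl fun k' _ => Finset.sum_congr rfl fun l' _ => ?_
  rw [psi_symm]; ring

lemma inner_swap (A B C D : Matrix (Fin 2) (Fin 2) ℂ) :
    inner2 (tensorApply A B PsiState) (tensorApply C D PsiState)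
      = inner2 (tensorApply B A PsiState) (tensorApply D C PsiState) := by
  simp only [inner2]
  rw [Finset.sum_comm]
  refine Finset.sum_congr rfl fun k _ => Finset.sum_congr rfl fun l _ => ?_
  rw [tensor_swap A B, tensor_swap C D]

theorem stmt_17 (a : Fin 2 → Fin 2 → ℝ)
    (U1 U2 : Matrix.specialUnitaryGroup (Fin 2) ℂ) :
    ∑ k : Fin 2, ∑ l : Fin 2, a k l *
        ‖(inner2 (PsiBasis k l)
          (tensorApply (U1 : Matrix (Fin 2) (Fin 2) ℂ) (U2 : Matrix (Fin 2) (Fin 2) ℂ)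
            PsiState))‖ ^ 2
      = ∑ k : Fin 2, ∑ l : Fin 2, a l k *
        ‖(inner2 (PsiBasis k l)
          (tensorApply (U2 : Matrix (Fin 2) (Fin 2) ℂ) (U1 : Matrix (Fin 2) (Fin 2) ℂ)
            PsiState))‖ ^ 2 := by
  rw [Finset.sum_comm]
  refine Finset.sum_congr rfl fun k _ => Finset.sum_congr rfl fun l _ => ?_
  have h := inner_swap (Cop l) (Cop k) (U1 : Matrix (Fin 2) (Fin 2) ℂ)
    (U2 : Matrix (Fin 2) (Fin 2) ℂ)
  simp only [PsiBasis]
  rw [h]
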